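/- For every player i, the span of the rows of T_i equals the orthogonal complement (with respect to the standard inner product on ℝ^{(∏_{j∈N_i} S_j) ⊕ (∏_{j≠i} S_j)}) of the span of the columns of H_i. -/

import Mathlib

open Matrix

/-- The `W`-drawing matrix. -/
def drawing {n : ℕ} (S : Fin n → Type*) [∀ i, Fintype (S i)] [∀ i, DecidableEq (S i)]
    (W : Finset (Fin n)) :
    Matrix ((j : {j : Fin n // j ∈ W}) → S j.1) ((j : Fin n) → S j) ℝ :=
  fun u x => if (fun j : {j : Fin n // j ∈ W} => x j.1) = u then 1 else 0

/-- The utility design matrix `T_i = [Γ_{N_i}ᵀ, Γ_{N\{i}}ᵀ]`. -/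
def Tmat {n : ℕ} (S : Fin n → Type*) [∀ i, Fintype (S i)] [∀ i, DecidableEq (S i)]
    (U : Fin n → Finset (Fin n)) (i : Fin n) :
    Matrix ((j : Fin n) → S j)
      (((j : {j : Fin n // j ∈ insert i (U i)}) → S j.1) ⊕
        ((j : {j : Fin n // j ∈ Finset.univ.erase i}) → S j.1)) ℝ :=
  Matrix.fromCols (drawing S (insert i (U i)))ᵀ (drawing S (Finset.univ.erase i))ᵀ

/-- `Λ_i`. -/
def Lmat {n : ℕ} (S : Fin n → Type*) [∀ i, Fintype (S i)] [∀ i, DecidableEq (S i)]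
    (U : Fin n → Finset (Fin n)) (i : Fin n) :
    Matrix ((j : {j : Fin n // j ∈ insert i (U i)}) → S j.1)
      ((j : {j : Fin n // j ∈ U i}) → S j.1) ℝ :=
  fun x y =>
    if (fun j : {j : Fin n // j ∈ U i} => x ⟨j.1, Finset.mem_insert_of_mem j.2⟩) = y then 1 else 0

/-- `Υ_i`. -/
def Umat {n : ℕ} (S : Fin n → Type*) [∀ i, Fintype (S i)] [∀ i, DecidableEq (S i)]
    (U : Fin n → Finset (Fin n)) (hU : ∀ i, i ∉ U i) (i : Fin n) :
    Matrix ((j : {j : Fin n // j ∈ Finset.univ.erase i}) → S j.1)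
      ((j : {j : Fin n // j ∈ U i}) → S j.1) ℝ :=
  fun x y =>
    if (fun j : {j : Fin n // j ∈ U i} =>
        x ⟨j.1, Finset.mem_erase.mpr ⟨fun h => hU i (by simpa [h] using j.2), Finset.mem_univ _⟩⟩) = y
    then 1 else 0

/-- `H_i = [Λ_i; -Υ_i]`. -/
def Hmat {n : ℕ} (S : Fin n → Type*) [∀ i, Fintype (S i)] [∀ i, DecidableEq (S i)]
    (U : Fin n → Finset (Fin n)) (hU : ∀ i, i ∉ U i) (i : Fin n) :
    Matrix (((j : {j : Fin n // j ∈ insert i (U i)}) → S j.1) ⊕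
        ((j : {j : Fin n // j ∈ Finset.univ.erase i}) → S j.1))
      ((j : {j : Fin n // j ∈ U i}) → S j.1) ℝ :=
  Matrix.fromRows (Lmat S U i) (-(Umat S U hU i))



section Aux
variable {n : ℕ} (S : Fin n → Type*) [∀ i, Fintype (S i)] [∀ i, DecidableEq (S i)]
  (U : Fin n → Finset (Fin n)) (i : Fin n)

def glueA (p : S i × ((j : {j : Fin n // j ∈ U i}) → S j.1)) :
    (j : {j : Fin n // j ∈ insert i (U i)}) → S j.1 :=
  fun j =>
    if h1 : j.1 = i then cast (congrArg S h1.symm) p.1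
    else p.2 ⟨j.1, (Finset.mem_insert.mp j.2).resolve_left h1⟩

def glueB (p : ((j : {j : Fin n // j ∈ U i}) → S j.1) ×
    ((j : {j : Fin n // j ∉ insert i (U i)}) → S j.1)) :
    (j : {j : Fin n // j ∈ Finset.univ.erase i}) → S j.1 :=
  fun j =>
    if h2 : j.1 ∈ U i then p.1 ⟨j.1, h2⟩
    else p.2 ⟨j.1, by simp [Finset.mem_insert, (Finset.mem_erase.mp j.2).1, h2]⟩

def glueXA (p : ((j : {j : Fin n // j ∈ insert i (U i)}) → S j.1) ×
    ((j : {j : Fin n // j ∉ insert i (U i)}) → S j.1)) : (j : Fin n) → S j :=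
  fun j => if h : j ∈ insert i (U i) then p.1 ⟨j, h⟩ else p.2 ⟨j, h⟩

def glueXB (p : ((j : {j : Fin n // j ∈ Finset.univ.erase i}) → S j.1) × S i) :
    (j : Fin n) → S j :=
  fun j =>
    if h : j = i then cast (congrArg S h.symm) p.2
    else p.1 ⟨j, Finset.mem_erase.mpr ⟨h, Finset.mem_univ _⟩⟩

/-- `X ≃ A × D`. -/
def EXA : ((j : Fin n) → S j) ≃ ((j : {j : Fin n // j ∈ insert i (U i)}) → S j.1) ×
    ((j : {j : Fin n // j ∉ insert i (U i)}) → S j.1) where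
  toFun x := (fun j => x j.1, fun j => x j.1)
  invFun := glueXA S U i
  left_inv x := by
    funext j
    unfold glueXA
    by_cases h : j ∈ insert i (U i) <;> simp [h]
  right_inv p := by
    obtain ⟨u, d⟩ := p
    refine Prod.ext ?_ ?_ <;> funext j
    · simp [glueXA, j.2]
    · simp [glueXA, j.2]

/-- `X ≃ B × S i`. -/
def EXB : ((j : Fin n) → S j) ≃ ((j : {j : Fin n // j ∈ Finset.univ.erase i}) → S j.1) × S i where
  toFun x := (fun j => x j.1, x i)
  invFun := glueXB S i
  left_inv x := by
    funext j
    unfold glueXB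
    by_cases h : j = i
    · subst h; simp
    · simp [h]
  right_inv p := by
    obtain ⟨b, s⟩ := p
    refine Prod.ext ?_ ?_
    · funext j
      have h : (j.1 : Fin n) ≠ i := (Finset.mem_erase.mp j.2).1
      simp [glueXB, h]
    · simp [glueXB]


@[simp] lemma EXA_symm_apply (p) : (EXA S U i).symm p = glueXA S U i p := rfl
@[simp] lemma EXB_symm_apply (p) : (EXB S i).symm p = glueXB S i p := rfl

lemma rhoG_glueXA (u d) :
    (fun j : {j : Fin n // j ∈ U i} => glueXA S U i (u, d) j.1)
      = fun j : {j : Fin n // j ∈ U i} => u ⟨j.1, Finset.mem_insert_of_mem j.2⟩ := by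
  funext j; simp [glueXA, Finset.mem_insert_of_mem j.2]

variable (hU : ∀ i, i ∉ U i)

include hU in
lemma rhoG_glueXB (b s) :
    (fun j : {j : Fin n // j ∈ U i} => glueXB S i (b, s) j.1)
      = fun j : {j : Fin n // j ∈ U i} =>
          b ⟨j.1, Finset.mem_erase.mpr ⟨fun h => hU i (by simpa [h] using j.2),
            Finset.mem_univ _⟩⟩ := by
  funext j
  have h : (j.1 : Fin n) ≠ i := fun h => hU i (by simpa [h] using j.2)
  simp [glueXB, h]


/-- `A ≃ S i × G`. -/
def EA : ((j : {j : Fin n // j ∈ insert i (U i)}) → S j.1) ≃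
    S i × ((j : {j : Fin n // j ∈ U i}) → S j.1) where
  toFun u := (u ⟨i, Finset.mem_insert_self _ _⟩,
    fun j => u ⟨j.1, Finset.mem_insert_of_mem j.2⟩)
  invFun := glueA S U i
  left_inv u := by
    funext j
    obtain ⟨j, hj⟩ := j
    unfold glueA
    by_cases h1 : j = i
    · subst h1; simp
    · simp [h1]
  right_inv p := by
    obtain ⟨s, y⟩ := p
    refine Prod.ext ?_ ?_
    · simp [glueA]
    · funext j
      have h1 : (j.1 : Fin n) ≠ i := fun h => hU i (by simpa [h] using j.2)
      simp [glueA, h1]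

/-- `B ≃ G × D`. -/
def EB : ((j : {j : Fin n // j ∈ Finset.univ.erase i}) → S j.1) ≃
    ((j : {j : Fin n // j ∈ U i}) → S j.1) ×
    ((j : {j : Fin n // j ∉ insert i (U i)}) → S j.1) where
  toFun b := (fun j => b ⟨j.1, Finset.mem_erase.mpr ⟨fun h => hU i (by simpa [h] using j.2),
      Finset.mem_univ _⟩⟩,
    fun j => b ⟨j.1, Finset.mem_erase.mpr ⟨fun h => j.2 (by simp [h]), Finset.mem_univ _⟩⟩)
  invFun := glueB S U i
  left_inv b := by
    funext j
    obtain ⟨j, hj⟩ := j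
    unfold glueB
    by_cases h2 : j ∈ U i <;> simp [h2]
  right_inv p := by
    obtain ⟨y, d⟩ := p
    refine Prod.ext ?_ ?_
    · funext j
      simp [glueB, j.2]
    · funext j
      have h2 : (j.1 : Fin n) ∉ U i := fun h => j.2 (Finset.mem_insert_of_mem h)
      simp [glueB, h2]

lemma rho1_glueXA (u d) :
    (fun j : {j : Fin n // j ∈ insert i (U i)} => glueXA S U i (u, d) j.1) = u := by
  funext j; simp [glueXA, j.2]

lemma rho2_glueXA (u d) :
    (fun j : {j : Fin n // j ∈ Finset.univ.erase i} => glueXA S U i (u, d) j.1)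
      = glueB S U i ((fun j : {j : Fin n // j ∈ U i} =>
          u ⟨j.1, Finset.mem_insert_of_mem j.2⟩), d) := by
  funext j
  obtain ⟨j, hj⟩ := j
  have h1 : j ≠ i := (Finset.mem_erase.mp hj).1
  unfold glueXA glueB
  by_cases h2 : j ∈ U i
  · simp [h2, Finset.mem_insert_of_mem h2]
  · have h : j ∉ insert i (U i) := by simp [Finset.mem_insert, h1, h2]
    simp [h, h2]

lemma rho2_glueXB (b s) :
    (fun j : {j : Fin n // j ∈ Finset.univ.erase i} => glueXB S i (b, s) j.1) = b := by
  funext j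
  have h : (j.1 : Fin n) ≠ i := (Finset.mem_erase.mp j.2).1
  simp [glueXB, h]

include hU in
lemma rho1_glueXB (b s) :
    (fun j : {j : Fin n // j ∈ insert i (U i)} => glueXB S i (b, s) j.1)
      = glueA S U i (s, fun j : {j : Fin n // j ∈ U i} =>
          b ⟨j.1, Finset.mem_erase.mpr ⟨fun h => hU i (by simpa [h] using j.2),
            Finset.mem_univ _⟩⟩) := by
  funext j
  obtain ⟨j, hj⟩ := j
  unfold glueXB glueA
  by_cases h1 : j = i
  · simp [h1]
  · simp [h1]

include hU in
lemma piU_glueA (p) :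
    (fun j : {j : Fin n // j ∈ U i} =>
      glueA S U i p ⟨j.1, Finset.mem_insert_of_mem j.2⟩) = p.2 := by
  funext j
  have h1 : (j.1 : Fin n) ≠ i := fun h => hU i (by simpa [h] using j.2)
  simp [glueA, h1]

lemma piU'_glueB (p) (pf : ∀ j : {j : Fin n // j ∈ U i}, j.1 ∈ Finset.univ.erase i) :
    (fun j : {j : Fin n // j ∈ U i} => glueB S U i p ⟨j.1, pf j⟩) = p.1 := by
  funext j
  simp [glueB, j.2]

@[simp] lemma EA_symm_apply (p) : (EA S U i hU).symm p = glueA S U i p := rfl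
@[simp] lemma EB_symm_apply (p) : (EB S U i hU).symm p = glueB S U i p := rfl

end Aux

section Aux2
variable {n : ℕ} (S : Fin n → Type*) [∀ i, Fintype (S i)] [∀ i, DecidableEq (S i)]
  (U : Fin n → Finset (Fin n)) (i : Fin n)

lemma rho1_glueXA' (u d) (j : {j : Fin n // j ∈ insert i (U i)}) :
    glueXA S U i (u, d) j.1 = u j := congrFun (rho1_glueXA S U i u d) j

lemma rho2_glueXA' (u d) (j : {j : Fin n // j ∈ Finset.univ.erase i}) :
    glueXA S U i (u, d) j.1
      = glueB S U i ((fun j : {j : Fin n // j ∈ U i} =>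
          u ⟨j.1, Finset.mem_insert_of_mem j.2⟩), d) j :=
  congrFun (rho2_glueXA S U i u d) j

lemma rhoG_glueXA' (u d) (j : {j : Fin n // j ∈ U i}) :
    glueXA S U i (u, d) j.1 = u ⟨j.1, Finset.mem_insert_of_mem j.2⟩ :=
  congrFun (rhoG_glueXA S U i u d) j

lemma rho2_glueXB' (b s) (j : {j : Fin n // j ∈ Finset.univ.erase i}) :
    glueXB S i (b, s) j.1 = b j := congrFun (rho2_glueXB S i b s) j

variable (hU : ∀ i, i ∉ U i)

include hU in
lemma rho1_glueXB' (b s) (j : {j : Fin n // j ∈ insert i (U i)}) :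
    glueXB S i (b, s) j.1
      = glueA S U i (s, fun j : {j : Fin n // j ∈ U i} =>
          b ⟨j.1, Finset.mem_erase.mpr ⟨fun h => hU i (by simpa [h] using j.2),
            Finset.mem_univ _⟩⟩) j :=
  congrFun (rho1_glueXB S U i hU b s) j

include hU in
lemma rhoG_glueXB' (b s) (j : {j : Fin n // j ∈ U i}) :
    glueXB S i (b, s) j.1
      = b ⟨j.1, Finset.mem_erase.mpr ⟨fun h => hU i (by simpa [h] using j.2),
          Finset.mem_univ _⟩⟩ :=
  congrFun (rhoG_glueXB S U i hU b s) j

end Aux2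

/-- For every player `i`, the span of the rows of `T_i` equals the
orthogonal complement (with respect to the standard inner product on
`ℝ^{(∏_{j∈N_i} S_j) ⊕ (∏_{j≠i} S_j)}`) of the span of the columns of `H_i`. -/
theorem span_rows_Tmat_eq_orthogonal_span_cols_Hmat
    {n : ℕ} (S : Fin n → Type*) [∀ i, Fintype (S i)] [∀ i, DecidableEq (S i)]
    [∀ i, Nonempty (S i)]
    (U : Fin n → Finset (Fin n)) (hU : ∀ i, i ∉ U i) (i : Fin n) :
    Submodule.span ℝ
        (Set.range fun r : (j : Fin n) → S j =>
          ((WithLp.equiv 2 _).symm (Tmat S U i r) :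
            EuclideanSpace ℝ
              (((j : {j : Fin n // j ∈ insert i (U i)}) → S j.1) ⊕
                ((j : {j : Fin n // j ∈ Finset.univ.erase i}) → S j.1)))) =
      (Submodule.span ℝ
        (Set.range fun c : (j : {j : Fin n // j ∈ U i}) → S j.1 =>
          ((WithLp.equiv 2 _).symm (fun r => Hmat S U hU i r c) :
            EuclideanSpace ℝ
              (((j : {j : Fin n // j ∈ insert i (U i)}) → S j.1) ⊕
                ((j : {j : Fin n // j ∈ Finset.univ.erase i}) → S j.1)))))ᗮ := by
  classical
  apply le_antisymm
  · rw [Submodule.span_le]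
    rintro _ ⟨x, rfl⟩
    rw [SetLike.mem_coe]
    refine (Submodule.mem_orthogonal _ _).mpr ?_
    intro w hw
    induction hw using Submodule.span_induction with
    | mem w hw =>
      obtain ⟨y, rfl⟩ := hw
      rw [PiLp.inner_apply]
      simp only [WithLp.equiv_symm_apply, PiLp.toLp_apply, WithLp.ofLp_toLp, RCLike.inner_apply', conj_trivial]
      rw [Fintype.sum_sum_type]
      simp only [Hmat, Tmat, Matrix.fromRows_apply_inl, Matrix.fromRows_apply_inr,
        Matrix.fromCols_apply_inl, Matrix.fromCols_apply_inr, Matrix.transpose_apply,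
        Matrix.neg_apply, Lmat, Umat, drawing, neg_mul]
      simp [mul_ite, mul_one, mul_zero, Finset.sum_ite_eq]
    | zero => simp
    | add a b ha hb iha ihb => rw [inner_add_left, iha, ihb, add_zero]
    | smul r a ha iha => rw [real_inner_smul_left, iha, mul_zero]
  · intro v hv
    set f : ((j : {j : Fin n // j ∈ insert i (U i)}) → S j.1) → ℝ :=
      fun u => v (Sum.inl u) with hf
    set g : ((j : {j : Fin n // j ∈ Finset.univ.erase i}) → S j.1) → ℝ :=
      fun b => v (Sum.inr b) with hg
    have hcol : ∀ y, (∑ u : (j : {j : Fin n // j ∈ insert i (U i)}) → S j.1,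
          (if (fun j : {j : Fin n // j ∈ U i} => u ⟨j.1, Finset.mem_insert_of_mem j.2⟩) = y
            then (1:ℝ) else 0) * f u)
        = ∑ b : (j : {j : Fin n // j ∈ Finset.univ.erase i}) → S j.1,
          (if (fun j : {j : Fin n // j ∈ U i} =>
              b ⟨j.1, Finset.mem_erase.mpr ⟨fun h => hU i (by simpa [h] using j.2),
                Finset.mem_univ _⟩⟩) = y then (1:ℝ) else 0) * g b := by
      intro y
      simp only [hf, hg]
      have h0 := (Submodule.mem_orthogonal _ _).mp hv _ (Submodule.subset_span ⟨y, rfl⟩)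
      rw [PiLp.inner_apply] at h0
      simp only [WithLp.equiv_symm_apply, PiLp.toLp_apply, WithLp.ofLp_toLp, RCLike.inner_apply', conj_trivial] at h0
      rw [Fintype.sum_sum_type] at h0
      simp only [Hmat, Matrix.fromRows_apply_inl, Matrix.fromRows_apply_inr, Matrix.neg_apply,
        Lmat, Umat, neg_mul, Finset.sum_neg_distrib] at h0
      linarith [h0]
    set c : ((j : {j : Fin n // j ∈ U i}) → S j.1) → ℝ :=
      fun y => ∑ s : S i, f (glueA S U i (s, y)) with hc
    have hc0 : ∀ y, (∑ s : S i, f (glueA S U i (s, y))) = c y := fun _ => rfl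
    have hc1 : ∀ y, (∑ u : (j : {j : Fin n // j ∈ insert i (U i)}) → S j.1,
        (if (fun j : {j : Fin n // j ∈ U i} => u ⟨j.1, Finset.mem_insert_of_mem j.2⟩) = y
          then (1:ℝ) else 0) * f u) = c y := by
      intro y
      rw [← Equiv.sum_comp (EA S U i hU).symm, Fintype.sum_prod_type]
      simp only [EA_symm_apply]
      simp only [piU_glueA S U i hU]
      simp only [ite_mul, one_mul, zero_mul, Finset.sum_ite_eq', Finset.mem_univ, if_pos]
      try exact hc0 y
    have hc2 : ∀ y, c y = ∑ d : (j : {j : Fin n // j ∉ insert i (U i)}) → S j.1,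
        g (glueB S U i (y, d)) := by
      intro y
      rw [← hc1 y, hcol y]
      rw [← Equiv.sum_comp (EB S U i hU).symm, Fintype.sum_prod_type]
      simp only [EB_symm_apply]
      simp only [piU'_glueB S U i]
      rw [Finset.sum_comm]
      simp only [ite_mul, one_mul, zero_mul, Finset.sum_ite_eq', Finset.mem_univ, if_pos]
    rw [Submodule.mem_span_range_iff_exists_fun]
    have hDne : Nonempty ((j : {j : Fin n // j ∉ insert i (U i)}) → S j.1) :=
      ⟨fun j => Classical.arbitrary _⟩
    have hK0 : ((Fintype.card ((j : {j : Fin n // j ∉ insert i (U i)}) → S j.1) : ℝ)) ≠ 0 :=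
      Nat.cast_ne_zero.mpr Fintype.card_ne_zero
    have hm0 : ((Fintype.card (S i) : ℝ)) ≠ 0 := Nat.cast_ne_zero.mpr Fintype.card_ne_zero
    refine ⟨fun x =>
      f (fun j => x j.1) /
          (Fintype.card ((j : {j : Fin n // j ∉ insert i (U i)}) → S j.1) : ℝ)
        + g (fun j => x j.1) / (Fintype.card (S i) : ℝ)
        - c (fun j => x j.1) /
            ((Fintype.card (S i) : ℝ) *
              (Fintype.card ((j : {j : Fin n // j ∉ insert i (U i)}) → S j.1) : ℝ)), ?_⟩
    have hstep : ∀ aa : ((j : Fin n) → S j) → ℝ,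
        (∑ x, aa x • ((WithLp.equiv 2 _).symm (Tmat S U i x) :
          EuclideanSpace ℝ (((j : {j : Fin n // j ∈ insert i (U i)}) → S j.1) ⊕
            ((j : {j : Fin n // j ∈ Finset.univ.erase i}) → S j.1))))
        = (WithLp.linearEquiv 2 ℝ _).symm (∑ x, aa x • Tmat S U i x) := by
      intro aa
      rw [map_sum]
      simp only [_root_.map_smul]
      rfl
    rw [hstep, LinearEquiv.symm_apply_eq]
    funext t
    rw [Finset.sum_apply]
    simp only [Pi.smul_apply, smul_eq_mul]
    rcases t with u | b
    · have hvt : (WithLp.linearEquiv 2 ℝ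
          ((((j : {j : Fin n // j ∈ insert i (U i)}) → S j.1) ⊕
            ((j : {j : Fin n // j ∈ Finset.univ.erase i}) → S j.1)) → ℝ)) v (Sum.inl u)
          = f u := rfl
      rw [hvt]
      simp only [Tmat, Matrix.fromCols_apply_inl, Matrix.transpose_apply, drawing]
      rw [← Equiv.sum_comp (EXA S U i).symm, Fintype.sum_prod_type]
      simp only [EXA_symm_apply]
      simp only [rho1_glueXA' S U i, rho2_glueXA' S U i, rhoG_glueXA' S U i]
      simp only [← Finset.sum_mul]
      simp only [mul_ite, mul_one, mul_zero, Finset.sum_ite_eq', Finset.mem_univ, if_pos]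
      rw [Finset.sum_sub_distrib, Finset.sum_add_distrib]
      simp only [← Finset.sum_div]
      rw [← hc2 _]
      simp only [Finset.sum_const, Finset.card_univ, nsmul_eq_mul]
      field_simp [hK0, hm0]
      ring
    · have hvt : (WithLp.linearEquiv 2 ℝ
          ((((j : {j : Fin n // j ∈ insert i (U i)}) → S j.1) ⊕
            ((j : {j : Fin n // j ∈ Finset.univ.erase i}) → S j.1)) → ℝ)) v (Sum.inr b)
          = g b := rfl
      rw [hvt]
      simp only [Tmat, Matrix.fromCols_apply_inr, Matrix.transpose_apply, drawing]
      rw [← Equiv.sum_comp (EXB S i).symm, Fintype.sum_prod_type]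
      simp only [EXB_symm_apply]
      simp only [rho2_glueXB' S i, rho1_glueXB' S U i hU, rhoG_glueXB' S U i hU]
      simp only [← Finset.sum_mul]
      simp only [mul_ite, mul_one, mul_zero, Finset.sum_ite_eq', Finset.mem_univ, if_pos]
      rw [Finset.sum_sub_distrib, Finset.sum_add_distrib]
      simp only [← Finset.sum_div]
      rw [hc0 _]
      simp only [Finset.sum_const, Finset.card_univ, nsmul_eq_mul]
      field_simp [hK0, hm0]
      ring
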